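/- arXiv:0711.0464 — 2 statements merged into one kernel-verified Lean document; each statement's English description precedes it below -/
import Mathlib

section
/- Let b_1,…,b_N ∈ ℤ² be nonzero vectors spanning ℝ² with b_1+…+b_N = 0. Let C and C' be two adjacent 2-dimensional cones of the secondary fan whose intersection C ∩ C' is a ray ρ, let I = {i ∈ {1,…,N} : b_i ∈ ρ}, and suppose C lies to the right of ρ and C' to the left, i.e., det(b_i, x) ≤ 0 for all i ∈ I and x ∈ C, and det(b_i, x) ≥ 0 for all i ∈ I and x ∈ C'. Then ψ_{C'} − ψ_C = Σ_{i ∈ I} Σ_{k=1}^N det(b_i,b_k)·e_k in ℤ^N, where e_1,…,e_N is the standard basis of ℤ^N. -/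
noncomputable section
open scoped Classical

/-- `det(u,v) = u₁v₂ - v₁u₂` for `u, v ∈ ℝ²`. -/
def det2 (u v : ℝ × ℝ) : ℝ := u.1 * v.2 - v.1 * u.2

/-- `det(u,v)` for integer vectors. -/
def detZ (u v : ℤ × ℤ) : ℤ := u.1 * v.2 - v.1 * u.2

/-- The canonical embedding `ℤ² → ℝ²`. -/
def toR2 (v : ℤ × ℤ) : ℝ × ℝ := ((v.1 : ℝ), (v.2 : ℝ))

/-- The ray `ℝ_{≥0}·v`. -/
def rayThru (v : ℝ × ℝ) : Set (ℝ × ℝ) := {x | ∃ t : ℝ, 0 ≤ t ∧ x = t • v}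

/-- `C` is a 2-dimensional cone of the secondary fan of `b`. -/
def IsSecCone {N : ℕ} (b : Fin N → ℝ × ℝ) (C : Set (ℝ × ℝ)) : Prop :=
  ∃ x ∈ (⋃ i, rayThru (b i))ᶜ,
    C = closure (connectedComponentIn ((⋃ i, rayThru (b i))ᶜ) x)

/-- The cone `ℝ_{≥0}·u + ℝ_{≥0}·v`. -/
def posCone (u v : ℝ × ℝ) : Set (ℝ × ℝ) :=
  {x | ∃ s t : ℝ, 0 ≤ s ∧ 0 ≤ t ∧ x = s • u + t • v}

/-- `ψ_C = Σ_{{i,j} ∈ L_C} |det(b i, b j)|·(e i + e j) ∈ ℤ^N`. -/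
noncomputable def psiC {N : ℕ} (b : Fin N → ℤ × ℤ) (C : Set (ℝ × ℝ)) : Fin N → ℤ :=
  ∑ i, ∑ j,
    if i < j ∧ C ⊆ posCone (toR2 (b i)) (toR2 (b j)) then
      |detZ (b i) (b j)| • (Pi.single i 1 + Pi.single j 1) else 0

-- basic det lemmas
lemma det2_toR2 (a c : ℤ × ℤ) : det2 (toR2 a) (toR2 c) = (detZ a c : ℝ) := by
  simp [det2, detZ, toR2]

lemma toR2_ne_zero {a : ℤ × ℤ} (h : a ≠ 0) : toR2 a ≠ 0 := by
  simp only [toR2, Prod.ext_iff, ne_eq, Prod.fst_zero, Prod.snd_zero] at *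
  intro ⟨h1, h2⟩
  exact h ⟨by exact_mod_cast h1, by exact_mod_cast h2⟩

lemma detZ_self (a : ℤ × ℤ) : detZ a a = 0 := by simp [detZ, mul_comm]

lemma det2_smul_left (t : ℝ) (u v : ℝ × ℝ) : det2 (t • u) v = t * det2 u v := by
  simp only [det2, Prod.smul_fst, Prod.smul_snd, smul_eq_mul]; ring

lemma det2_smul_right (t : ℝ) (u v : ℝ × ℝ) : det2 u (t • v) = t * det2 u v := by
  simp only [det2, Prod.smul_fst, Prod.smul_snd, smul_eq_mul]; ring

lemma det2_swap (u v : ℝ × ℝ) : det2 u v = - det2 v u := by unfold det2; ring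

lemma continuous_det2_right (u : ℝ × ℝ) : Continuous (fun x => det2 u x) := by
  unfold det2; fun_prop

lemma continuous_det2_left (w : ℝ × ℝ) : Continuous (fun x => det2 x w) := by
  unfold det2; fun_prop

lemma eq_smul_of_det2_eq_zero {u x : ℝ × ℝ} (hu : u ≠ 0) (h : det2 u x = 0) :
    ∃ c : ℝ, x = c • u := by
  rcases eq_or_ne u.1 0 with h1 | h1
  · have h2 : u.2 ≠ 0 := by
      intro h2; exact hu (Prod.ext h1 h2)
    refine ⟨x.2 / u.2, ?_⟩
    have hx1 : x.1 = 0 := by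
      rw [det2, h1] at h
      have : x.1 * u.2 = 0 := by linarith
      rcases mul_eq_zero.mp this with h' | h'
      · exact h'
      · exact absurd h' h2
    ext
    · simp [hx1, h1, Prod.smul_fst]
    · simp only [Prod.smul_snd, smul_eq_mul]; field_simp
  · refine ⟨x.1 / u.1, ?_⟩
    have : u.1 * x.2 = x.1 * u.2 := by rw [det2] at h; linarith
    ext
    · simp only [Prod.smul_fst, smul_eq_mul]; field_simp
    · simp only [Prod.smul_snd, smul_eq_mul]; field_simp; linarith [this]

lemma smul_mem_rayThru {u : ℝ × ℝ} {c : ℝ} (hc : 0 ≤ c) : c • u ∈ rayThru u := ⟨c, hc, rfl⟩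

lemma norm_sq_pos {v : ℝ × ℝ} (hv : v ≠ 0) : 0 < v.1 * v.1 + v.2 * v.2 := by
  rcases eq_or_ne v.1 0 with h1 | h1
  · have h2 : v.2 ≠ 0 := fun h2 => hv (Prod.ext h1 h2)
    nlinarith [sq_nonneg v.1, mul_self_pos.mpr h2]
  · nlinarith [sq_nonneg v.2, mul_self_pos.mpr h1]

lemma isClosed_rayThru {v : ℝ × ℝ} (hv : v ≠ 0) : IsClosed (rayThru v) := by
  have hray : rayThru v
      = {x : ℝ × ℝ | det2 v x = 0} ∩ {x : ℝ × ℝ | 0 ≤ x.1 * v.1 + x.2 * v.2} := by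
    ext x
    constructor
    · rintro ⟨t, ht, rfl⟩
      refine ⟨by simp only [Set.mem_setOf_eq, det2, Prod.smul_fst, Prod.smul_snd,
        smul_eq_mul]; ring, ?_⟩
      simp only [Set.mem_setOf_eq, Prod.smul_fst, Prod.smul_snd, smul_eq_mul]
      nlinarith [norm_sq_pos hv]
    · rintro ⟨h1, h2⟩
      obtain ⟨c, rfl⟩ := eq_smul_of_det2_eq_zero hv h1
      refine ⟨c, ?_, rfl⟩
      simp only [Set.mem_setOf_eq, Prod.smul_fst, Prod.smul_snd, smul_eq_mul] at h2
      nlinarith [norm_sq_pos hv]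
  rw [hray]
  exact IsClosed.inter (isClosed_eq (continuous_det2_right v) continuous_const)
    (isClosed_le continuous_const (by fun_prop))

lemma det2_add_right (u x y : ℝ × ℝ) : det2 u (x + y) = det2 u x + det2 u y := by
  simp only [det2, Prod.fst_add, Prod.snd_add]; ring

lemma cramer {u w : ℝ × ℝ} (hd : det2 u w ≠ 0) (x : ℝ × ℝ) :
    x = (det2 x w / det2 u w) • u + (det2 u x / det2 u w) • w := by
  have hd' := hd
  unfold det2 at *
  ext
  · simp only [Prod.fst_add, Prod.smul_fst, smul_eq_mul]
    rw [div_mul_eq_mul_div, div_mul_eq_mul_div, ← add_div, eq_div_iff hd']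
    ring
  · simp only [Prod.snd_add, Prod.smul_snd, smul_eq_mul]
    rw [div_mul_eq_mul_div, div_mul_eq_mul_div, ← add_div, eq_div_iff hd']
    ring

lemma mem_posCone_iff {u w : ℝ × ℝ} (hd : det2 u w ≠ 0) (x : ℝ × ℝ) :
    x ∈ posCone u w ↔ 0 ≤ det2 u w * det2 x w ∧ 0 ≤ det2 u w * det2 u x := by
  constructor
  · rintro ⟨s, t, hs, ht, rfl⟩
    have h1 : det2 (s • u + t • w) w = s * det2 u w := by
      unfold det2; simp only [Prod.fst_add, Prod.snd_add, Prod.smul_fst, Prod.smul_snd,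
        smul_eq_mul]; ring
    have h2 : det2 u (s • u + t • w) = t * det2 u w := by
      unfold det2; simp only [Prod.fst_add, Prod.snd_add, Prod.smul_fst, Prod.smul_snd,
        smul_eq_mul]; ring
    rw [h1, h2]
    constructor <;> nlinarith [sq_nonneg (det2 u w)]
  · rintro ⟨h1, h2⟩
    refine ⟨det2 x w / det2 u w, det2 u x / det2 u w, ?_, ?_, cramer hd x⟩
    · rw [div_nonneg_iff]
      rcases hd.lt_or_gt with h | h
      · right; constructor <;> nlinarith
      · left; constructor <;> nlinarith
    · rw [div_nonneg_iff]
      rcases hd.lt_or_gt with h | h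
      · right; constructor <;> nlinarith
      · left; constructor <;> nlinarith

lemma posCone_comm (u w : ℝ × ℝ) : posCone u w = posCone w u := by
  ext x
  constructor <;> rintro ⟨s, t, hs, ht, rfl⟩ <;> exact ⟨t, s, ht, hs, (add_comm _ _)⟩

lemma isClosed_posCone {u w : ℝ × ℝ} (hd : det2 u w ≠ 0) : IsClosed (posCone u w) := by
  have : posCone u w = {x : ℝ × ℝ | 0 ≤ det2 u w * det2 x w}
      ∩ {x : ℝ × ℝ | 0 ≤ det2 u w * det2 u x} := by
    ext x; exact mem_posCone_iff hd x
  rw [this]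
  exact IsClosed.inter
    (isClosed_le continuous_const (by exact (continuous_const.mul (continuous_det2_left w))))
    (isClosed_le continuous_const (by exact (continuous_const.mul (continuous_det2_right u))))

/-- membership in the cone, off the two boundary rays, gives strict inequalities -/
lemma strict_of_mem {u w x : ℝ × ℝ} (hd : det2 u w ≠ 0)
    (hx : x ∈ posCone u w) (hxu : x ∉ rayThru u) (hxw : x ∉ rayThru w) :
    0 < det2 u w * det2 x w ∧ 0 < det2 u w * det2 u x := by
  have hu : u ≠ 0 := by rintro rfl; exact hd (by unfold det2; simp)
  have hw : w ≠ 0 := by rintro rfl; exact hd (by unfold det2; simp)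
  obtain ⟨h1, h2⟩ := (mem_posCone_iff hd x).mp hx
  constructor
  · rcases h1.lt_or_eq with h | h
    · exact h
    · exfalso
      have hxw0 : det2 x w = 0 := by
        rcases mul_eq_zero.mp h.symm with h' | h'
        · exact absurd h' hd
        · exact h'
      have : det2 w x = 0 := by rw [det2_swap] at hxw0; linarith
      obtain ⟨c, rfl⟩ := eq_smul_of_det2_eq_zero hw this
      have hcd : det2 u (c • w) = c * det2 u w := det2_smul_right c u w
      rw [hcd] at h2
      have hc : 0 ≤ c := by nlinarith [sq_nonneg (det2 u w), mul_self_pos.mpr hd]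
      exact hxw (smul_mem_rayThru hc)
  · rcases h2.lt_or_eq with h | h
    · exact h
    · exfalso
      have hux0 : det2 u x = 0 := by
        rcases mul_eq_zero.mp h.symm with h' | h'
        · exact absurd h' hd
        · exact h'
      obtain ⟨c, rfl⟩ := eq_smul_of_det2_eq_zero hu hux0
      have hcd : det2 (c • u) w = c * det2 u w := det2_smul_left c u w
      rw [hcd] at h1
      have hc : 0 ≤ c := by nlinarith [mul_self_pos.mpr hd]
      exact hxu (smul_mem_rayThru hc)

/-- absorption: a preconnected set inside the complement of the rays which meets
the strict interior region of a cone is entirely inside the cone. -/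
lemma absorb {Ω S O : Set (ℝ × ℝ)} {U : Set (ℝ × ℝ)}
    (hconn : IsPreconnected Ω) (hΩU : Ω ⊆ U)
    (hS : IsClosed S) (hO : IsOpen O) (hOS : O ⊆ S)
    (hSU : ∀ x ∈ S, x ∈ U → x ∈ O)
    (hne : (Ω ∩ O).Nonempty) : closure Ω ⊆ S := by
  have hsub : Ω ⊆ O ∪ Sᶜ := by
    intro x hx
    by_cases hxS : x ∈ S
    · exact Or.inl (hSU x hxS (hΩU hx))
    · exact Or.inr hxS
  have hΩS : Ω ⊆ S := by
    by_contra hns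
    obtain ⟨y, hyΩ, hyS⟩ := Set.not_subset.mp hns
    obtain ⟨z, hz⟩ := hconn O Sᶜ hO hS.isOpen_compl hsub hne ⟨y, hyΩ, hyS⟩
    exact hz.2.2 (hOS hz.2.1)
  exact closure_minimal hΩS hS

/-- if `C`, `C'` are adjacent 2-dimensional cones of the secondary fan
meeting in the ray `ρ`, with `C` to the right and `C'` to the left of `ρ`, and
`I = {i : b i ∈ ρ}`, then `ψ_{C'} − ψ_C = Σ_{i ∈ I} Σ_k det(b i, b k)·e k`. -/
theorem stmt11 (N : ℕ) (b : Fin N → ℤ × ℤ)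
    (hnz : ∀ i, b i ≠ 0)
    (hspan : Submodule.span ℝ (Set.range fun i => toR2 (b i)) = ⊤)
    (hsum : ∑ i, b i = 0)
    (C C' : Set (ℝ × ℝ))
    (hC : IsSecCone (fun i => toR2 (b i)) C)
    (hC' : IsSecCone (fun i => toR2 (b i)) C')
    (ρ : Set (ℝ × ℝ)) (hρ : ρ = C ∩ C')
    (hray : ∃ v : ℝ × ℝ, v ≠ 0 ∧ ρ = rayThru v)
    (hright : ∀ i, toR2 (b i) ∈ ρ → ∀ x ∈ C, det2 (toR2 (b i)) x ≤ 0)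
    (hleft : ∀ i, toR2 (b i) ∈ ρ → ∀ x ∈ C', 0 ≤ det2 (toR2 (b i)) x) :
    psiC b C' - psiC b C =
      fun k => ∑ i, if toR2 (b i) ∈ ρ then detZ (b i) (b k) else 0 := by
  obtain ⟨v, hv0, hρv⟩ := hray
  obtain ⟨x0, hx0, hCeq⟩ := hC
  obtain ⟨x0', hx0', hC'eq⟩ := hC'
  set U : Set (ℝ × ℝ) := (⋃ i, rayThru (toR2 (b i)))ᶜ with hUdef
  have hnotU : ∀ (i : Fin N) (x : ℝ × ℝ), x ∈ U → x ∉ rayThru (toR2 (b i)) :=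
    fun i x hx hmem => hx (Set.mem_iUnion.mpr ⟨i, hmem⟩)
  set Ω : Set (ℝ × ℝ) := connectedComponentIn U x0 with hΩdef
  set Ω' : Set (ℝ × ℝ) := connectedComponentIn U x0' with hΩ'def
  have hCcl : C = closure Ω := hCeq
  have hC'cl : C' = closure Ω' := hC'eq
  have hΩU : Ω ⊆ U := connectedComponentIn_subset U x0
  have hΩ'U : Ω' ⊆ U := connectedComponentIn_subset U x0'
  have hΩconn : IsPreconnected Ω := isPreconnected_connectedComponentIn
  have hΩ'conn : IsPreconnected Ω' := isPreconnected_connectedComponentIn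
  have hx0Ω : x0 ∈ Ω := mem_connectedComponentIn hx0
  have hx0Ω' : x0' ∈ Ω' := mem_connectedComponentIn hx0'
  have hvρ : v ∈ ρ := by rw [hρv]; exact ⟨1, zero_le_one, (one_smul ℝ v).symm⟩
  have hvC : v ∈ C := (hρ ▸ hvρ).1
  have hvC' : v ∈ C' := (hρ ▸ hvρ).2
  -- i ∈ I iff b i is a positive multiple of v
  have huρ : ∀ i : Fin N, toR2 (b i) ∈ ρ → ∃ t : ℝ, 0 < t ∧ toR2 (b i) = t • v := by
    intro i hi
    rw [hρv] at hi
    obtain ⟨t, ht, htv⟩ := hi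
    rcases ht.lt_or_eq with h | h
    · exact ⟨t, h, htv⟩
    · exfalso
      apply toR2_ne_zero (hnz i)
      rw [htv, ← h, zero_smul]
  -- a point of U on the line through a nonzero b i, lying weakly on the b i side, is impossible
  have hlineU : ∀ (i : Fin N) (x : ℝ × ℝ) (c : ℝ), x ∈ U → 0 ≤ c →
      x = c • toR2 (b i) → False := by
    intro i x c hxU hc hxc
    exact hnotU i x hxU (hxc ▸ smul_mem_rayThru hc)
  -- main sufficient condition for containment, for i with b i on the ray
  have Gsub : ∀ (i j : Fin N) (Ω₀ C₀ : Set (ℝ × ℝ)), IsPreconnected Ω₀ → Ω₀ ⊆ U →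
      C₀ = closure Ω₀ → v ∈ C₀ → toR2 (b i) ∈ ρ →
      det2 (toR2 (b i)) (toR2 (b j)) ≠ 0 →
      (∀ x ∈ C₀, 0 ≤ det2 (toR2 (b i)) (toR2 (b j)) * det2 (toR2 (b i)) x) →
      C₀ ⊆ posCone (toR2 (b i)) (toR2 (b j)) := by
    intro i j Ω₀ C₀ hconn hsubU hCeq0 hvC₀ hiρ hd hsign
    set u := toR2 (b i) with hu
    set w := toR2 (b j) with hw
    set d := det2 u w with hdd
    obtain ⟨t, ht, hut⟩ := huρ i hiρ
    have hdvw : det2 v w = d / t := by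
      have : d = t * det2 v w := by
        rw [hdd, show u = t • v from hut, det2_smul_left]
      field_simp [this]
      rw [this]; ring
    have hvlt : 0 < d * det2 v w := by
      rw [hdvw, mul_div_assoc']
      exact div_pos (mul_self_pos.mpr hd) ht
    have hO'open : IsOpen {x : ℝ × ℝ | 0 < d * det2 x w} :=
      isOpen_lt continuous_const (continuous_const.mul (continuous_det2_left w))
    have hvcl : v ∈ closure Ω₀ := hCeq0 ▸ hvC₀
    obtain ⟨x, hxO', hxΩ⟩ := mem_closure_iff.mp hvcl _ hO'open hvlt
    have hxC₀ : x ∈ C₀ := hCeq0 ▸ subset_closure hxΩ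
    have hx2 : 0 < d * det2 u x := by
      rcases (hsign x hxC₀).lt_or_eq with h | h
      · exact h
      · exfalso
        have hux : det2 u x = 0 := by
          rcases mul_eq_zero.mp h.symm with h' | h'
          · exact absurd h' hd
          · exact h'
        obtain ⟨c, hc⟩ := eq_smul_of_det2_eq_zero (toR2_ne_zero (hnz i)) hux
        have hxw : det2 x w = c * d := by
          rw [show x = c • u from hc, det2_smul_left]
        have hxO2 : (0:ℝ) < d * det2 x w := hxO'
        rw [hxw] at hxO2
        have hc0 : 0 ≤ c := by nlinarith [mul_self_pos.mpr hd]
        exact hlineU i x c (hsubU hxΩ) hc0 hc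
    have hOopen : IsOpen {x : ℝ × ℝ | 0 < d * det2 x w ∧ 0 < d * det2 u x} :=
      hO'open.inter (isOpen_lt continuous_const (continuous_const.mul (continuous_det2_right u)))
    rw [hCeq0]
    refine absorb hconn hsubU (isClosed_posCone hd) hOopen ?_ ?_ ⟨x, hxΩ, hxO', hx2⟩
    · intro y hy
      exact (mem_posCone_iff hd y).mpr ⟨le_of_lt hy.1, le_of_lt hy.2⟩
    · intro y hyS hyU
      exact strict_of_mem hd hyS (hnotU i y hyU) (hnotU j y hyU)
  -- impossibility of containment for i on the ray, wrong side
  have Gnot : ∀ (i j : Fin N) (Ω₀ C₀ : Set (ℝ × ℝ)), Ω₀.Nonempty → Ω₀ ⊆ U →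
      C₀ = closure Ω₀ →
      det2 (toR2 (b i)) (toR2 (b j)) ≠ 0 →
      (∀ x ∈ C₀, det2 (toR2 (b i)) (toR2 (b j)) * det2 (toR2 (b i)) x ≤ 0) →
      C₀ ⊆ posCone (toR2 (b i)) (toR2 (b j)) → False := by
    intro i j Ω₀ C₀ hne hsubU hCeq0 hd hsign hsub
    obtain ⟨x, hxΩ⟩ := hne
    have hxC₀ : x ∈ C₀ := hCeq0 ▸ subset_closure hxΩ
    obtain ⟨h1, h2⟩ := (mem_posCone_iff hd x).mp (hsub hxC₀)
    have h0 : det2 (toR2 (b i)) (toR2 (b j)) * det2 (toR2 (b i)) x = 0 :=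
      le_antisymm (hsign x hxC₀) h2
    have hux : det2 (toR2 (b i)) x = 0 := by
      rcases mul_eq_zero.mp h0 with h' | h'
      · exact absurd h' hd
      · exact h'
    obtain ⟨c, hc⟩ := eq_smul_of_det2_eq_zero (toR2_ne_zero (hnz i)) hux
    have hxw : det2 x (toR2 (b j)) = c * det2 (toR2 (b i)) (toR2 (b j)) := by
      rw [hc, det2_smul_left]
    rw [hxw] at h1
    have hc0 : 0 ≤ c := by nlinarith [mul_self_pos.mpr hd]
    exact hlineU i x c (hsubU hxΩ) hc0 hc
  -- transfer of containment between the two cones, when neither generator is on the ray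
  have G2 : ∀ (i j : Fin N) (Ω₂ C₁ C₂ : Set (ℝ × ℝ)), IsPreconnected Ω₂ → Ω₂ ⊆ U →
      C₂ = closure Ω₂ → v ∈ C₁ → v ∈ C₂ →
      toR2 (b i) ∉ ρ → toR2 (b j) ∉ ρ →
      det2 (toR2 (b i)) (toR2 (b j)) ≠ 0 →
      C₁ ⊆ posCone (toR2 (b i)) (toR2 (b j)) →
      C₂ ⊆ posCone (toR2 (b i)) (toR2 (b j)) := by
    intro i j Ω₂ C₁ C₂ hconn hsubU hCeq2 hvC₁ hvC₂ hiρ hjρ hd hsub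
    have hvray : ∀ (l : Fin N), toR2 (b l) ∉ ρ → v ∉ rayThru (toR2 (b l)) := by
      intro l hl hmem
      obtain ⟨c, hc, hvc⟩ := hmem
      have hc0 : c ≠ 0 := by
        rintro rfl
        rw [zero_smul] at hvc
        exact hv0 hvc
      apply hl
      rw [hρv]
      exact ⟨c⁻¹, inv_nonneg.mpr hc, by rw [hvc, smul_smul, inv_mul_cancel₀ hc0, one_smul]⟩
    obtain ⟨hs1, hs2⟩ := strict_of_mem hd (hsub hvC₁) (hvray i hiρ) (hvray j hjρ)
    set u := toR2 (b i)
    set w := toR2 (b j)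
    set d := det2 u w with hdd
    have hOopen : IsOpen {x : ℝ × ℝ | 0 < d * det2 x w ∧ 0 < d * det2 u x} :=
      (isOpen_lt continuous_const (continuous_const.mul (continuous_det2_left w))).inter
        (isOpen_lt continuous_const (continuous_const.mul (continuous_det2_right u)))
    have hvcl : v ∈ closure Ω₂ := hCeq2 ▸ hvC₂
    obtain ⟨x, hxO, hxΩ⟩ := mem_closure_iff.mp hvcl _ hOopen ⟨hs1, hs2⟩
    rw [hCeq2]
    refine absorb hconn hsubU (isClosed_posCone hd) hOopen ?_ ?_ ⟨x, hxΩ, hxO⟩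
    · intro y hy
      exact (mem_posCone_iff hd y).mpr ⟨le_of_lt hy.1, le_of_lt hy.2⟩
    · intro y hyS hyU
      exact strict_of_mem hd hyS (hnotU i y hyU) (hnotU j y hyU)
  -- cast of determinant nonvanishing
  have hcast : ∀ i j : Fin N, detZ (b i) (b j) ≠ 0 →
      det2 (toR2 (b i)) (toR2 (b j)) ≠ 0 := by
    intro i j h
    rw [det2_toR2]
    exact_mod_cast h
  have hdet2vv : det2 v v = 0 := by unfold det2; ring
  have hDzero : ∀ i j : Fin N, toR2 (b i) ∈ ρ → toR2 (b j) ∈ ρ →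
      detZ (b i) (b j) = 0 := by
    intro i j hi hj
    obtain ⟨t, ht, hut⟩ := huρ i hi
    obtain ⟨s, hs, hws⟩ := huρ j hj
    have : (detZ (b i) (b j) : ℝ) = 0 := by
      rw [← det2_toR2, hut, hws, det2_smul_left, det2_smul_right, hdet2vv]
      ring
    exact_mod_cast this
  have hanti : ∀ i j : Fin N, detZ (b j) (b i) = - detZ (b i) (b j) := by
    intro i j; unfold detZ; ring
  have fact1 : ∀ i j : Fin N, toR2 (b i) ∈ ρ → detZ (b i) (b j) ≠ 0 →
      (C' ⊆ posCone (toR2 (b i)) (toR2 (b j)) ↔ 0 < detZ (b i) (b j)) := by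
    intro i j hi hD
    have hd := hcast i j hD
    constructor
    · intro hsub
      by_contra hn
      push_neg at hn
      have hneg : detZ (b i) (b j) < 0 := lt_of_le_of_ne hn hD
      have hnegR : det2 (toR2 (b i)) (toR2 (b j)) < 0 := by
        rw [det2_toR2]; exact_mod_cast hneg
      refine Gnot i j Ω' C' ⟨x0', hx0Ω'⟩ hΩ'U hC'cl hd ?_ hsub
      intro x hx
      nlinarith [hleft i hi x hx]
    · intro hpos
      have hposR : 0 < det2 (toR2 (b i)) (toR2 (b j)) := by
        rw [det2_toR2]; exact_mod_cast hpos
      exact Gsub i j Ω' C' hΩ'conn hΩ'U hC'cl hvC' hi hd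
        (fun x hx => mul_nonneg (le_of_lt hposR) (hleft i hi x hx))
  have fact2 : ∀ i j : Fin N, toR2 (b i) ∈ ρ → detZ (b i) (b j) ≠ 0 →
      (C ⊆ posCone (toR2 (b i)) (toR2 (b j)) ↔ detZ (b i) (b j) < 0) := by
    intro i j hi hD
    have hd := hcast i j hD
    constructor
    · intro hsub
      by_contra hn
      push_neg at hn
      have hpos : 0 < detZ (b i) (b j) := lt_of_le_of_ne hn (Ne.symm hD)
      have hposR : 0 < det2 (toR2 (b i)) (toR2 (b j)) := by
        rw [det2_toR2]; exact_mod_cast hpos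
      refine Gnot i j Ω C ⟨x0, hx0Ω⟩ hΩU hCcl hd ?_ hsub
      intro x hx
      nlinarith [hright i hi x hx]
    · intro hneg
      have hnegR : det2 (toR2 (b i)) (toR2 (b j)) < 0 := by
        rw [det2_toR2]; exact_mod_cast hneg
      refine Gsub i j Ω C hΩconn hΩU hCcl hvC hi hd ?_
      intro x hx
      nlinarith [hright i hi x hx]
  have fact3 : ∀ i j : Fin N, toR2 (b i) ∉ ρ → toR2 (b j) ∉ ρ → detZ (b i) (b j) ≠ 0 →
      (C ⊆ posCone (toR2 (b i)) (toR2 (b j)) ↔ C' ⊆ posCone (toR2 (b i)) (toR2 (b j))) := by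
    intro i j hi hj hD
    have hd := hcast i j hD
    exact ⟨fun h => G2 i j Ω' C C' hΩ'conn hΩ'U hC'cl hvC hvC' hi hj hd h,
      fun h => G2 i j Ω C' C hΩconn hΩU hCcl hvC' hvC hi hj hd h⟩
  -- the coefficient computation, pair by pair
  set a : Fin N → Fin N → ℤ := fun i j =>
    (if toR2 (b i) ∈ ρ then detZ (b i) (b j) else 0)
      + (if toR2 (b j) ∈ ρ then detZ (b j) (b i) else 0) with ha
  have hz : ∀ i j : Fin N,
      (if C' ⊆ posCone (toR2 (b i)) (toR2 (b j)) then |detZ (b i) (b j)| else 0)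
        - (if C ⊆ posCone (toR2 (b i)) (toR2 (b j)) then |detZ (b i) (b j)| else 0)
      = a i j := by
    intro i j
    rw [ha]
    by_cases hi : toR2 (b i) ∈ ρ
    · by_cases hj : toR2 (b j) ∈ ρ
      · simp [hDzero i j hi hj, hDzero j i hj hi, hi, hj]
      · rcases lt_trichotomy (detZ (b i) (b j)) 0 with hD | hD | hD
        · have hne : detZ (b i) (b j) ≠ 0 := ne_of_lt hD
          have h1 : ¬ C' ⊆ posCone (toR2 (b i)) (toR2 (b j)) := by
            intro h
            exact absurd ((fact1 i j hi hne).mp h) (by omega)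
          have h2 : C ⊆ posCone (toR2 (b i)) (toR2 (b j)) := (fact2 i j hi hne).mpr hD
          simp only [h1, h2, if_true, if_false, hi, hj]
          rw [abs_of_neg hD]
          ring
        · simp [hD, hi, hj, hanti i j]
        · have hne : detZ (b i) (b j) ≠ 0 := ne_of_gt hD
          have h1 : C' ⊆ posCone (toR2 (b i)) (toR2 (b j)) := (fact1 i j hi hne).mpr hD
          have h2 : ¬ C ⊆ posCone (toR2 (b i)) (toR2 (b j)) := by
            intro h
            exact absurd ((fact2 i j hi hne).mp h) (by omega)
          simp only [h1, h2, if_true, if_false, hi, hj]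
          rw [abs_of_pos hD]
          ring
    · by_cases hj : toR2 (b j) ∈ ρ
      · have hcomm : posCone (toR2 (b i)) (toR2 (b j)) = posCone (toR2 (b j)) (toR2 (b i)) :=
          posCone_comm _ _
        have habs : |detZ (b i) (b j)| = |detZ (b j) (b i)| := by
          rw [hanti i j, abs_neg]
        rw [hcomm, habs]
        rcases lt_trichotomy (detZ (b j) (b i)) 0 with hD | hD | hD
        · have hne : detZ (b j) (b i) ≠ 0 := ne_of_lt hD
          have h1 : ¬ C' ⊆ posCone (toR2 (b j)) (toR2 (b i)) := by
            intro h
            exact absurd ((fact1 j i hj hne).mp h) (by omega)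
          have h2 : C ⊆ posCone (toR2 (b j)) (toR2 (b i)) := (fact2 j i hj hne).mpr hD
          simp only [h1, h2, if_true, if_false, hi, hj]
          rw [abs_of_neg hD]
          ring
        · have hD' : detZ (b i) (b j) = 0 := by have := hanti i j; omega
          simp [hD, hD', hi, hj]
        · have hne : detZ (b j) (b i) ≠ 0 := ne_of_gt hD
          have h1 : C' ⊆ posCone (toR2 (b j)) (toR2 (b i)) := (fact1 j i hj hne).mpr hD
          have h2 : ¬ C ⊆ posCone (toR2 (b j)) (toR2 (b i)) := by
            intro h
            exact absurd ((fact2 j i hj hne).mp h) (by omega)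
          simp only [h1, h2, if_true, if_false, hi, hj]
          rw [abs_of_pos hD]
          ring
      · by_cases hD : detZ (b i) (b j) = 0
        · simp [hD, hi, hj, hanti i j]
        · by_cases hc : C ⊆ posCone (toR2 (b i)) (toR2 (b j))
          · have hc' : C' ⊆ posCone (toR2 (b i)) (toR2 (b j)) := (fact3 i j hi hj hD).mp hc
            simp [hc, hc', hi, hj]
          · have hc' : ¬ C' ⊆ posCone (toR2 (b i)) (toR2 (b j)) :=
              fun h => hc ((fact3 i j hi hj hD).mpr h)
            simp [hc, hc', hi, hj]
  -- row sums vanish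
  have hs1 : ∑ j, (b j).1 = 0 := by
    have := congrArg Prod.fst hsum
    rw [Prod.fst_sum] at this
    simpa using this
  have hs2 : ∑ j, (b j).2 = 0 := by
    have := congrArg Prod.snd hsum
    rw [Prod.snd_sum] at this
    simpa using this
  have hrow : ∀ i : Fin N, ∑ j, detZ (b i) (b j) = 0 := by
    intro i
    unfold detZ
    rw [Finset.sum_sub_distrib, ← Finset.mul_sum, ← Finset.sum_mul, hs1, hs2]
    ring
  have hasymm : ∀ i j : Fin N, a i j = a j i := by
    intro i j; rw [ha]; exact add_comm _ _
  have hadiag : ∀ i : Fin N, a i i = 0 := by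
    intro i; rw [ha]; simp [detZ_self]
  have pair : ∀ i j : Fin N,
      (if i < j ∧ C' ⊆ posCone (toR2 (b i)) (toR2 (b j)) then
          |detZ (b i) (b j)| • (Pi.single i 1 + Pi.single j 1 : Fin N → ℤ) else 0)
        - (if i < j ∧ C ⊆ posCone (toR2 (b i)) (toR2 (b j)) then
          |detZ (b i) (b j)| • (Pi.single i 1 + Pi.single j 1 : Fin N → ℤ) else 0)
      = if i < j then a i j • (Pi.single i 1 + Pi.single j 1 : Fin N → ℤ) else 0 := by
    intro i j
    by_cases hij : i < j
    · simp only [hij, true_and, if_true]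
      have e1 : ∀ (p : Prop) (inst : Decidable p) (n : ℤ),
          (if p then n • (Pi.single i 1 + Pi.single j 1 : Fin N → ℤ) else 0)
            = (if p then n else 0) • (Pi.single i 1 + Pi.single j 1 : Fin N → ℤ) := by
        intro p inst n; split_ifs <;> simp
      rw [e1, e1, ← sub_smul, hz i j]
    · simp [hij]
  have hdiff : psiC b C' - psiC b C
      = ∑ i, ∑ j,
          (if i < j then a i j • (Pi.single i 1 + Pi.single j 1 : Fin N → ℤ) else 0) := by
    unfold psiC
    rw [← Finset.sum_sub_distrib]
    refine Finset.sum_congr rfl fun i _ => ?_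
    rw [← Finset.sum_sub_distrib]
    exact Finset.sum_congr rfl fun j _ => pair i j
  rw [hdiff]
  funext k
  simp only [Finset.sum_apply]
  have happ : ∀ i j : Fin N,
      (if i < j then a i j • (Pi.single i 1 + Pi.single j 1 : Fin N → ℤ) else 0) k
      = (if k = i then (if i < j then a i j else 0) else 0)
        + (if k = j then (if i < j then a i j else 0) else 0) := by
    intro i j
    by_cases h1 : i < j
    · by_cases h2 : k = i
      · by_cases h3 : k = j
        · exfalso; rw [← h2, ← h3] at h1; exact lt_irrefl k h1
        · simp [h1, h2, h3, Pi.single_apply, h1.ne, h1.ne']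
      · by_cases h3 : k = j
        · simp [h1, h2, h3, Pi.single_apply, h1.ne, h1.ne']
        · simp [h1, h2, h3, Pi.single_apply, h1.ne, h1.ne']
    · simp [h1]
  calc (∑ i, ∑ j,
        (if i < j then a i j • (Pi.single i 1 + Pi.single j 1 : Fin N → ℤ) else 0) k)
      = ∑ i, ∑ j, ((if k = i then (if i < j then a i j else 0) else 0)
        + (if k = j then (if i < j then a i j else 0) else 0)) :=
        Finset.sum_congr rfl fun i _ => Finset.sum_congr rfl fun j _ => happ i j
    _ = (∑ i, ∑ j, (if k = i then (if i < j then a i j else 0) else 0))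
        + (∑ i, ∑ j, (if k = j then (if i < j then a i j else 0) else 0)) := by
        rw [← Finset.sum_add_distrib]
        exact Finset.sum_congr rfl fun i _ => Finset.sum_add_distrib
    _ = (∑ j, if k < j then a k j else 0) + (∑ i, if i < k then a i k else 0) := by
        congr 1
        · have h4 : ∀ i : Fin N, (∑ j, (if k = i then (if i < j then a i j else 0) else 0))
              = if k = i then (∑ j, if i < j then a i j else 0) else 0 := by
            intro i; split_ifs <;> simp
          rw [Finset.sum_congr rfl fun i _ => h4 i, Finset.sum_ite_eq]
          simp
        · refine Finset.sum_congr rfl fun i _ => ?_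
          rw [Finset.sum_ite_eq]
          simp
    _ = ∑ i, ((if k < i then a k i else 0) + (if i < k then a i k else 0)) := by
        rw [Finset.sum_add_distrib]
    _ = ∑ i, a i k := by
        refine Finset.sum_congr rfl fun i _ => ?_
        rcases lt_trichotomy i k with h | h | h
        · simp [h, lt_asymm h]
        · subst h; simp [lt_irrefl, hadiag i]
        · simp [h, lt_asymm h, hasymm k i]
    _ = ∑ i, (if toR2 (b i) ∈ ρ then detZ (b i) (b k) else 0) := by
        simp only [ha]
        rw [Finset.sum_add_distrib, Finset.sum_ite_irrel, Finset.sum_const_zero, hrow k]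
        simp
end
end

section
/- Let b_1,…,b_N ∈ ℤ² be nonzero vectors spanning ℝ² and let λ = (λ_1,…,λ_N) ∈ ℝ^N. For each i define the i-th grid G_i = {x ∈ ℝ² : ⟨x,b_i⟩ + λ_i ∈ ℤ}, a union of parallel lines. Assume the non-resonance condition: for every x ∈ ℝ², the number of indices i with ⟨x,b_i⟩ + λ_i ∈ ℤ is at most 2. Let X = {x ∈ ℝ² : there exist i ≠ j with x ∈ G_i ∩ G_j} be the set of grid intersection points. Then the translation action of ℤ² on ℝ² preserves X, and X consists of exactly Σ_{1 ≤ i < j ≤ N} |det(b_i,b_j)| orbits under this ℤ²-action. -/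
noncomputable section

/-- The standard inner product on `ℝ²`. -/
def ip (x y : ℝ × ℝ) : ℝ := x.1 * y.1 + x.2 * y.2

/-- The `i`-th grid: `G i = {x ∈ ℝ² : ⟨x, b i⟩ + λ i ∈ ℤ}`. -/
def grid {N : ℕ} (b : Fin N → ℤ × ℤ) (l : Fin N → ℝ) (i : Fin N) : Set (ℝ × ℝ) :=
  {x | ∃ n : ℤ, ip x (toR2 (b i)) + l i = (n : ℝ)}

/-- The set of grid intersection points. -/
def gridX {N : ℕ} (b : Fin N → ℤ × ℤ) (l : Fin N → ℝ) : Set (ℝ × ℝ) :=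
  {x | ∃ i j, i ≠ j ∧ x ∈ grid b l i ∧ x ∈ grid b l j}

namespace Stmt13Aux


def orb (x : ℝ × ℝ) : Set (ℝ × ℝ) := {y | ∃ v : ℤ × ℤ, y = x + toR2 v}

lemma ip_add_toR2 (x : ℝ × ℝ) (v w : ℤ × ℤ) :
    ip (x + toR2 v) (toR2 w) = ip x (toR2 w) + ((v.1 * w.1 + v.2 * w.2 : ℤ) : ℝ) := by
  simp only [ip, toR2, Prod.fst_add, Prod.snd_add]
  push_cast; ring

lemma orb_eq_iff {x y : ℝ × ℝ} : orb x = orb y ↔ ∃ v : ℤ × ℤ, y = x + toR2 v := by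
  constructor
  · intro h
    have : y ∈ orb y := ⟨0, by simp [toR2]⟩
    rw [← h] at this
    exact this
  · rintro ⟨w, rfl⟩
    ext z
    constructor
    · rintro ⟨v, rfl⟩
      refine ⟨v - w, ?_⟩
      simp only [toR2, Prod.ext_iff, Prod.fst_add, Prod.snd_add, Prod.fst_sub, Prod.snd_sub]
      push_cast
      constructor <;> ring
    · rintro ⟨v, rfl⟩
      refine ⟨w + v, ?_⟩
      simp only [toR2, Prod.ext_iff, Prod.fst_add, Prod.snd_add]
      push_cast
      constructor <;> ring


lemma natCard_quot (Nm : Submodule ℤ (Fin 2 → ℤ)) (e : (Fin 2 → ℤ) ≃ₗ[ℤ] Nm) :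
    Nat.card ((Fin 2 → ℤ) ⧸ Nm) =
      (LinearMap.det (Nm.subtype ∘ₗ (e : (Fin 2 → ℤ) →ₗ[ℤ] Nm))).natAbs := by
  classical
  obtain ⟨n, snf⟩ := Nm.smithNormalForm (Pi.basisFun ℤ (Fin 2))
  have hn : n = 2 := by
    rcases snf with ⟨bM, bN, f, a, hsnf⟩
    have hc := card_eq_of_linearEquiv ℤ (bN.equivFun.symm.trans e.symm)
    simpa using hc
  subst hn
  obtain ⟨bM, bN, f, a, hsnf⟩ := snf
  -- reindex bN so that bN₂ j = a' j • bM j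
  have hfb : Function.Bijective f := (Finite.injective_iff_bijective).mp f.injective
  let g : Fin 2 ≃ Fin 2 := Equiv.ofBijective f hfb
  let a' : Fin 2 → ℤ := fun j => a (g.symm j)
  let bN₂ : Module.Basis (Fin 2) ℤ Nm := bN.reindex g
  have hsnf₂ : ∀ j, (bN₂ j : Fin 2 → ℤ) = a' j • bM j := by
    intro j
    simp only [bN₂, Module.Basis.reindex_apply, hsnf, a']
    rw [show f (g.symm j) = g (g.symm j) from rfl, g.apply_symm_apply]
  -- the equiv built from the bases
  let e₂ : (Fin 2 → ℤ) ≃ₗ[ℤ] Nm := bM.equiv bN₂ (Equiv.refl _)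
  have hdet : (LinearMap.det (Nm.subtype ∘ₗ (e : (Fin 2 → ℤ) →ₗ[ℤ] Nm))).natAbs =
      (LinearMap.det (Nm.subtype ∘ₗ (e₂ : (Fin 2 → ℤ) →ₗ[ℤ] Nm))).natAbs :=
    Int.natAbs_eq_iff_associated.mpr (LinearMap.associated_det_comp_equiv _ _ _)
  rw [hdet]
  -- compute the det of the second map: it is diagonal a'
  have hdiag : LinearMap.toMatrix bM bM (Nm.subtype ∘ₗ (e₂ : (Fin 2 → ℤ) →ₗ[ℤ] Nm)) =
      Matrix.diagonal a' := by
    ext i j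
    have happ : (Nm.subtype ∘ₗ (e₂ : (Fin 2 → ℤ) →ₗ[ℤ] Nm)) (bM j) = a' j • bM j := by
      simp only [LinearMap.comp_apply, Submodule.subtype_apply]
      rw [show (e₂ : (Fin 2 → ℤ) →ₗ[ℤ] Nm) (bM j) = bM.equiv bN₂ (Equiv.refl _) (bM j) from rfl,
        Module.Basis.equiv_apply, Equiv.refl_apply, hsnf₂]
    rw [LinearMap.toMatrix_apply, happ, map_smul, Module.Basis.repr_self]
    by_cases h : i = j
    · subst h; simp [Matrix.diagonal_apply_eq]
    · simp [Matrix.diagonal_apply_ne _ h, Finsupp.single_eq_of_ne h]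
  have hdet2 : LinearMap.det (Nm.subtype ∘ₗ (e₂ : (Fin 2 → ℤ) →ₗ[ℤ] Nm)) = ∏ i, a' i := by
    rw [← LinearMap.det_toMatrix bM, hdiag, Matrix.det_diagonal]
  rw [hdet2]
  -- now compute the card via the index formula
  have hidx : Nat.card ((Fin 2 → ℤ) ⧸ Nm) = Nm.toAddSubgroup.index := rfl
  have := Module.Basis.SmithNormalForm.toAddSubgroup_index_eq_pow_mul_prod
    (⟨bM, bN, f, a, hsnf⟩ : Module.Basis.SmithNormalForm Nm (Fin 2) 2)
  rw [hidx, this]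
  simp only [Fintype.card_fin, Nat.sub_self, pow_zero, one_mul]
  have : ∀ i : Fin 2, (Ideal.span {a i}).toAddSubgroup.index = (a i).natAbs := by
    intro i
    rw [Ideal.span_singleton_toAddSubgroup_eq_zmultiples, Int.index_zmultiples]
  rw [Finset.prod_congr rfl fun i _ => this i]
  have h1 : (∏ i, a' i).natAbs = ∏ i, (a' i).natAbs := map_prod Int.natAbsHom a' Finset.univ
  have h2 : ∏ j, (a' j).natAbs = ∏ i, (a i).natAbs := Equiv.prod_comp g.symm (fun i => (a i).natAbs)
  rw [h1, h2]

lemma pair_count (u v : ℤ × ℤ) (hd : detZ u v ≠ 0) (a c : ℝ) :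
    ({O : Set (ℝ × ℝ) | ∃ x, ((∃ m : ℤ, ip x (toR2 u) + a = (m : ℝ)) ∧
        (∃ n : ℤ, ip x (toR2 v) + c = (n : ℝ))) ∧ O = orb x}).Finite ∧
    ({O : Set (ℝ × ℝ) | ∃ x, ((∃ m : ℤ, ip x (toR2 u) + a = (m : ℝ)) ∧
        (∃ n : ℤ, ip x (toR2 v) + c = (n : ℝ))) ∧ O = orb x}).ncard = (detZ u v).natAbs := by
  classical
  set S : Set (Set (ℝ × ℝ)) := {O : Set (ℝ × ℝ) | ∃ x, ((∃ m : ℤ, ip x (toR2 u) + a = (m : ℝ)) ∧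
        (∃ n : ℤ, ip x (toR2 v) + c = (n : ℝ))) ∧ O = orb x} with hS
  set dR : ℝ := ((detZ u v : ℤ) : ℝ) with hdR'
  have hdR : dR ≠ 0 := Int.cast_ne_zero.mpr hd
  have hdRdef : dR = (u.1 : ℝ) * v.2 - (v.1 : ℝ) * u.2 := by
    rw [hdR']; simp only [detZ]; push_cast; ring
  set M : Matrix (Fin 2) (Fin 2) ℤ := !![u.1, u.2; v.1, v.2] with hM
  set Bm : (Fin 2 → ℤ) →ₗ[ℤ] (Fin 2 → ℤ) := Matrix.toLin' M with hBm
  have hBapp : ∀ w : Fin 2 → ℤ, Bm w = ![u.1 * w 0 + u.2 * w 1, v.1 * w 0 + v.2 * w 1] := by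
    intro w
    funext i
    fin_cases i <;>
      simp [hBm, hM, Matrix.toLin'_apply, Matrix.mulVec, dotProduct, Fin.sum_univ_two]
  have hinj : Function.Injective Bm := by
    intro w w' h
    rw [hBapp w, hBapp w'] at h
    have e0 : u.1 * w 0 + u.2 * w 1 = u.1 * w' 0 + u.2 * w' 1 := by
      have := congrFun h 0; simpa using this
    have e1 : v.1 * w 0 + v.2 * w 1 = v.1 * w' 0 + v.2 * w' 1 := by
      have := congrFun h 1; simpa using this
    have hd0 : detZ u v * w 0 = detZ u v * w' 0 := by
      simp only [detZ]; linear_combination v.2 * e0 - u.2 * e1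
    have hd1 : detZ u v * w 1 = detZ u v * w' 1 := by
      simp only [detZ]; linear_combination u.1 * e1 - v.1 * e0
    funext i
    fin_cases i
    · exact mul_left_cancel₀ hd hd0
    · exact mul_left_cancel₀ hd hd1
  set ψ : (Fin 2 → ℤ) → ℝ × ℝ := fun m =>
    (((v.2 : ℝ) * ((m 0 : ℝ) - a) - (u.2 : ℝ) * ((m 1 : ℝ) - c)) / dR,
     ((u.1 : ℝ) * ((m 1 : ℝ) - c) - (v.1 : ℝ) * ((m 0 : ℝ) - a)) / dR) with hψ
  have hψ0 : ∀ m, ip (ψ m) (toR2 u) + a = ((m 0 : ℤ) : ℝ) := by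
    intro m
    have hA : ip (ψ m) (toR2 u) = ((m 0 : ℤ) : ℝ) - a := by
      simp only [hψ, ip, toR2]
      rw [div_mul_eq_mul_div, div_mul_eq_mul_div, ← add_div, div_eq_iff hdR]
      linear_combination (a - ((m 0 : ℤ) : ℝ)) * hdRdef
    rw [hA]; ring
  have hψ1 : ∀ m, ip (ψ m) (toR2 v) + c = ((m 1 : ℤ) : ℝ) := by
    intro m
    have hA : ip (ψ m) (toR2 v) = ((m 1 : ℤ) : ℝ) - c := by
      simp only [hψ, ip, toR2]
      rw [div_mul_eq_mul_div, div_mul_eq_mul_div, ← add_div, div_eq_iff hdR]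
      linear_combination (c - ((m 1 : ℤ) : ℝ)) * hdRdef
    rw [hA]; ring
  have hmem : ∀ m, orb (ψ m) ∈ S := fun m => ⟨ψ m, ⟨⟨m 0, hψ0 m⟩, ⟨m 1, hψ1 m⟩⟩, rfl⟩
  have hsurj : ∀ x : ℝ × ℝ, (∃ m : ℤ, ip x (toR2 u) + a = (m : ℝ)) →
      (∃ n : ℤ, ip x (toR2 v) + c = (n : ℝ)) → ∃ m : Fin 2 → ℤ, ψ m = x := by
    rintro x ⟨m0, hm⟩ ⟨n0, hn⟩
    refine ⟨![m0, n0], ?_⟩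
    simp only [ip, toR2] at hm hn
    have h1 : ((v.2 : ℝ) * ((m0 : ℝ) - a) - (u.2 : ℝ) * ((n0 : ℝ) - c)) / dR = x.1 := by
      rw [div_eq_iff hdR]
      linear_combination -(v.2 : ℝ) * hm + (u.2 : ℝ) * hn - x.1 * hdRdef
    have h2 : ((u.1 : ℝ) * ((n0 : ℝ) - c) - (v.1 : ℝ) * ((m0 : ℝ) - a)) / dR = x.2 := by
      rw [div_eq_iff hdR]
      linear_combination -(u.1 : ℝ) * hn + (v.1 : ℝ) * hm - x.2 * hdRdef
    rw [hψ]
    exact Prod.ext (by simpa using h1) (by simpa using h2)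
  have key : ∀ m m' : Fin 2 → ℤ, orb (ψ m) = orb (ψ m') ↔ m' - m ∈ LinearMap.range Bm := by
    intro m m'
    rw [orb_eq_iff]
    constructor
    · rintro ⟨w, hw⟩
      refine ⟨![w.1, w.2], ?_⟩
      rw [hBapp]
      have h0 : ((m' 0 : ℤ) : ℝ) = ((m 0 : ℤ) : ℝ) + ((w.1 * u.1 + w.2 * u.2 : ℤ) : ℝ) := by
        rw [← hψ0 m', hw, ip_add_toR2]; linarith [hψ0 m]
      have h1 : ((m' 1 : ℤ) : ℝ) = ((m 1 : ℤ) : ℝ) + ((w.1 * v.1 + w.2 * v.2 : ℤ) : ℝ) := by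
        rw [← hψ1 m', hw, ip_add_toR2]; linarith [hψ1 m]
      have h0' : m' 0 = m 0 + (w.1 * u.1 + w.2 * u.2) := by exact_mod_cast h0
      have h1' : m' 1 = m 1 + (w.1 * v.1 + w.2 * v.2) := by exact_mod_cast h1
      funext i
      fin_cases i
      · show u.1 * w.1 + u.2 * w.2 = m' 0 - m 0
        linear_combination -h0'
      · show v.1 * w.1 + v.2 * w.2 = m' 1 - m 1
        linear_combination -h1'
    · rintro ⟨w, hw⟩
      rw [hBapp] at hw
      have e0 : u.1 * w 0 + u.2 * w 1 = m' 0 - m 0 := by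
        have := congrFun hw 0; simpa using this
      have e1 : v.1 * w 0 + v.2 * w 1 = m' 1 - m 1 := by
        have := congrFun hw 1; simpa using this
      have E0 : ((m' 0 : ℤ) : ℝ) = ((m 0 : ℤ) : ℝ) + (u.1 : ℝ) * (w 0 : ℝ) + (u.2 : ℝ) * (w 1 : ℝ) := by
        exact_mod_cast congrArg (fun z : ℤ => (z : ℝ))
          (by linear_combination -e0 : m' 0 = m 0 + u.1 * w 0 + u.2 * w 1)
      have E1 : ((m' 1 : ℤ) : ℝ) = ((m 1 : ℤ) : ℝ) + (v.1 : ℝ) * (w 0 : ℝ) + (v.2 : ℝ) * (w 1 : ℝ) := by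
        exact_mod_cast congrArg (fun z : ℤ => (z : ℝ))
          (by linear_combination -e1 : m' 1 = m 1 + v.1 * w 0 + v.2 * w 1)
      refine ⟨(w 0, w 1), ?_⟩
      rw [hψ]
      refine Prod.ext ?_ ?_
      · show ((v.2 : ℝ) * ((m' 0 : ℝ) - a) - (u.2 : ℝ) * ((m' 1 : ℝ) - c)) / dR
          = ((v.2 : ℝ) * ((m 0 : ℝ) - a) - (u.2 : ℝ) * ((m 1 : ℝ) - c)) / dR + ((w 0 : ℤ) : ℝ)
        rw [div_add' _ _ _ hdR, div_eq_div_iff hdR hdR]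
        linear_combination (dR * v.2) * E0 - (dR * u.2) * E1 - (dR * (w 0 : ℝ)) * hdRdef
      · show ((u.1 : ℝ) * ((m' 1 : ℝ) - c) - (v.1 : ℝ) * ((m' 0 : ℝ) - a)) / dR
          = ((u.1 : ℝ) * ((m 1 : ℝ) - c) - (v.1 : ℝ) * ((m 0 : ℝ) - a)) / dR + ((w 1 : ℤ) : ℝ)
        rw [div_add' _ _ _ hdR, div_eq_div_iff hdR hdR]
        linear_combination (dR * u.1) * E1 - (dR * v.1) * E0 - (dR * (w 1 : ℝ)) * hdRdef
  -- the quotient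
  let Q := (Fin 2 → ℤ) ⧸ LinearMap.range Bm
  let F : Q → Set (ℝ × ℝ) :=
    Quotient.lift (fun m => orb (ψ m)) (by
      intro m m' hmm'
      have h2 : (Submodule.Quotient.mk m : (Fin 2 → ℤ) ⧸ LinearMap.range Bm)
          = Submodule.Quotient.mk m' := Quotient.sound hmm'
      rw [Submodule.Quotient.eq] at h2
      exact ((key m' m).mpr h2).symm)
  have hFmk : ∀ m : Fin 2 → ℤ, F (Submodule.Quotient.mk m) = orb (ψ m) := fun m => rfl
  have hFinj : Function.Injective F := by
    intro q q'
    induction q using Quotient.ind with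
    | _ m =>
    induction q' using Quotient.ind with
    | _ m' =>
    intro h
    have h' : m' - m ∈ LinearMap.range Bm := (key m m').mp h
    show Submodule.Quotient.mk m = Submodule.Quotient.mk m'
    rw [Submodule.Quotient.eq]
    simpa using neg_mem h'
  have hrange : Set.range F = S := by
    ext O
    constructor
    · rintro ⟨q, rfl⟩
      induction q using Quotient.ind with
      | _ m => exact hmem m
    · rintro ⟨x, ⟨hx1, hx2⟩, rfl⟩
      obtain ⟨m, hm⟩ := hsurj x hx1 hx2
      exact ⟨Submodule.Quotient.mk m, by rw [hFmk, hm]⟩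
  have hQcard : Nat.card Q = (detZ u v).natAbs := by
    have hcomp : (LinearMap.range Bm).subtype ∘ₗ
        (LinearEquiv.ofInjective Bm hinj : (Fin 2 → ℤ) →ₗ[ℤ] LinearMap.range Bm) = Bm := by
      ext x : 1; rfl
    rw [show Q = ((Fin 2 → ℤ) ⧸ LinearMap.range Bm) from rfl,
      natCard_quot _ (LinearEquiv.ofInjective Bm hinj), hcomp, hBm, LinearMap.det_toLin', hM,
      Matrix.det_fin_two_of]
    congr 1
    simp only [detZ]; ring
  have hQfin : Finite Q := Nat.finite_of_card_ne_zero (by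
    rw [hQcard]; exact Int.natAbs_ne_zero.mpr hd)
  have hSfin : S.Finite := hrange ▸ Set.finite_range F
  refine ⟨hSfin, ?_⟩
  calc S.ncard = Nat.card S := (Nat.card_coe_set_eq _).symm
    _ = Nat.card (Set.range F) := by rw [hrange]
    _ = Nat.card Q := Nat.card_range_of_injective hFinj
    _ = (detZ u v).natAbs := hQcard


lemma grid_translate {N : ℕ} {b : Fin N → ℤ × ℤ} {l : Fin N → ℝ} (i : Fin N) (v : ℤ × ℤ)
    {x : ℝ × ℝ} (h : x ∈ grid b l i) : x + toR2 v ∈ grid b l i := by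
  obtain ⟨n, hn⟩ := h
  refine ⟨n + (v.1 * (b i).1 + v.2 * (b i).2), ?_⟩
  rw [ip_add_toR2]
  push_cast
  linarith

lemma sub_toR2 (y : ℝ × ℝ) (v : ℤ × ℤ) : y = (y + toR2 v) + toR2 (-v) := by
  refine Prod.ext ?_ ?_ <;>
    simp only [toR2, Prod.fst_add, Prod.snd_add, Prod.fst_neg, Prod.snd_neg] <;>
    push_cast <;> ring

lemma exists_nonpar {N : ℕ} (b : Fin N → ℤ × ℤ)
    (hspan : Submodule.span ℝ (Set.range fun i => toR2 (b i)) = ⊤)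
    (i : Fin N) (hnz : b i ≠ 0) : ∃ k, detZ (b i) (b k) ≠ 0 := by
  by_contra hcon
  push_neg at hcon
  set f : (ℝ × ℝ) →ₗ[ℝ] ℝ :=
    (((b i).2 : ℝ) • LinearMap.fst ℝ ℝ ℝ) - (((b i).1 : ℝ) • LinearMap.snd ℝ ℝ ℝ) with hf
  have hker : Submodule.span ℝ (Set.range fun k => toR2 (b k)) ≤ LinearMap.ker f := by
    rw [Submodule.span_le]
    rintro _ ⟨k, rfl⟩
    have hk : (((detZ (b i) (b k) : ℤ)) : ℝ) = 0 := by rw [hcon k]; norm_num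
    simp only [detZ] at hk
    push_cast at hk
    simp only [SetLike.mem_coe, LinearMap.mem_ker, hf, LinearMap.sub_apply, LinearMap.smul_apply,
      LinearMap.fst_apply, LinearMap.snd_apply, smul_eq_mul, toR2]
    linarith
  rw [hspan] at hker
  have h1 : f ((((b i).2 : ℝ)), -(((b i).1 : ℝ))) = 0 := hker Submodule.mem_top
  simp only [hf, LinearMap.sub_apply, LinearMap.smul_apply, LinearMap.fst_apply,
    LinearMap.snd_apply, smul_eq_mul] at h1
  have h2 : (((b i).1 : ℝ)) = 0 ∧ (((b i).2 : ℝ)) = 0 := by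
    constructor <;> nlinarith [sq_nonneg (((b i).1 : ℝ)), sq_nonneg (((b i).2 : ℝ))]
  exact hnz (Prod.ext (by exact_mod_cast h2.1) (by exact_mod_cast h2.2))

lemma par_empty {N : ℕ} {b : Fin N → ℤ × ℤ} {l : Fin N → ℝ}
    (hnz : ∀ i, b i ≠ 0)
    (hspan : Submodule.span ℝ (Set.range fun i => toR2 (b i)) = ⊤)
    (hnonres : ∀ x : ℝ × ℝ, ({i : Fin N | x ∈ grid b l i}).ncard ≤ 2)
    {i j : Fin N} (hij : i ≠ j) (hdet : detZ (b i) (b j) = 0) :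
    ∀ x : ℝ × ℝ, ¬(x ∈ grid b l i ∧ x ∈ grid b l j) := by
  rintro x ⟨⟨mi, hmi⟩, ⟨mj, hmj⟩⟩
  obtain ⟨k, hk⟩ := exists_nonpar b hspan i (hnz i)
  have hdk : (((detZ (b i) (b k) : ℤ)) : ℝ) ≠ 0 := Int.cast_ne_zero.mpr hk
  have hdkdef : (((detZ (b i) (b k) : ℤ)) : ℝ)
      = ((b i).1 : ℝ) * ((b k).2 : ℝ) - ((b k).1 : ℝ) * ((b i).2 : ℝ) := by
    simp only [detZ]; push_cast; ring
  set t : ℝ := (- l k - ip x (toR2 (b k))) / (((detZ (b i) (b k) : ℤ)) : ℝ) with ht'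
  have ht : t * (((detZ (b i) (b k) : ℤ)) : ℝ) = - l k - ip x (toR2 (b k)) := by
    rw [ht', div_mul_cancel₀ _ hdk]
  set z : ℝ × ℝ := (x.1 - t * (((b i).2 : ℝ)), x.2 + t * (((b i).1 : ℝ))) with hz
  have hzi : z ∈ grid b l i := by
    refine ⟨mi, ?_⟩
    simp only [ip, toR2, hz] at hmi ⊢
    linear_combination hmi
  have hzj : z ∈ grid b l j := by
    refine ⟨mj, ?_⟩
    have hd0 : ((b i).1 : ℝ) * ((b j).2 : ℝ) - ((b j).1 : ℝ) * ((b i).2 : ℝ) = 0 := by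
      have : (((detZ (b i) (b j) : ℤ)) : ℝ) = 0 := by rw [hdet]; norm_num
      simp only [detZ] at this; push_cast at this; linarith
    simp only [ip, toR2, hz] at hmj ⊢
    linear_combination hmj + t * hd0
  have hzk : z ∈ grid b l k := by
    refine ⟨0, ?_⟩
    simp only [ip, toR2, hz] at ht ⊢
    push_cast
    linear_combination ht - t * hdkdef
  have hki : k ≠ i := by
    rintro rfl
    apply hk
    simp only [detZ]; ring
  have hkj : k ≠ j := by
    rintro rfl
    exact hk hdet
  have hsub : ({i, j, k} : Set (Fin N)) ⊆ {i' | z ∈ grid b l i'} := by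
    rintro y hy
    rcases hy with rfl | rfl | rfl
    · exact hzi
    · exact hzj
    · exact hzk
  have h3 : ({i, j, k} : Set (Fin N)).ncard = 3 :=
    Set.ncard_eq_three.mpr ⟨i, j, k, hij, (Ne.symm hki), (Ne.symm hkj), rfl⟩
  have hle := Set.ncard_le_ncard hsub (Set.toFinite _)
  have := hnonres z
  omega

lemma ncard_biUnion {α β : Type*} (P : Finset α) (f : α → Set β)
    (hfin : ∀ p ∈ P, (f p).Finite)
    (hdisj : ∀ p ∈ P, ∀ q ∈ P, p ≠ q → Disjoint (f p) (f q)) :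
    (⋃ p ∈ P, f p).ncard = ∑ p ∈ P, (f p).ncard := by
  classical
  induction P using Finset.induction_on with
  | empty => simp
  | insert _ _ ha ih =>
    rename_i a P'
    rw [Finset.sum_insert ha]
    have hun : (⋃ p ∈ insert a P', f p) = f a ∪ ⋃ p ∈ P', f p := by
      simp [Set.biUnion_insert]
    have hd : Disjoint (f a) (⋃ p ∈ P', f p) := by
      rw [Set.disjoint_left]
      intro x hx hx'
      rw [Set.mem_iUnion₂] at hx'
      obtain ⟨p, hp, hxp⟩ := hx'
      have hne : a ≠ p := by rintro rfl; exact ha hp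
      exact Set.disjoint_left.mp
        (hdisj a (Finset.mem_insert_self a P') p (Finset.mem_insert_of_mem hp) hne) hx hxp
    rw [hun, Set.ncard_union_eq hd (hfin a (Finset.mem_insert_self a P'))
      (Set.Finite.biUnion (Finset.finite_toSet P') (fun p hp =>
        hfin p (Finset.mem_insert_of_mem hp)))]
    rw [ih (fun p hp => hfin p (Finset.mem_insert_of_mem hp))
      (fun p hp q hq hpq => hdisj p (Finset.mem_insert_of_mem hp) q
        (Finset.mem_insert_of_mem hq) hpq)]


open Stmt13Aux

end Stmt13Aux

open Stmt13Aux in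
/-- under the non-resonance condition, the set `X` of grid intersection
points is invariant under translation by `ℤ²` and consists of exactly
`Σ_{i<j} |det(b i, b j)|` orbits of this `ℤ²`-action. -/
theorem stmt13 (N : ℕ) (b : Fin N → ℤ × ℤ) (l : Fin N → ℝ)
    (hnz : ∀ i, b i ≠ 0)
    (hspan : Submodule.span ℝ (Set.range fun i => toR2 (b i)) = ⊤)
    (hnonres : ∀ x : ℝ × ℝ, ({i : Fin N | x ∈ grid b l i}).ncard ≤ 2) :
    (∀ v : ℤ × ℤ, ∀ x ∈ gridX b l, x + toR2 v ∈ gridX b l) ∧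
    {O : Set (ℝ × ℝ) | ∃ x ∈ gridX b l,
        O = {y | ∃ v : ℤ × ℤ, y = x + toR2 v}}.ncard =
      ∑ i, ∑ j, if i < j then (detZ (b i) (b j)).natAbs else 0 := by
  classical
  constructor
  · rintro v x ⟨i, j, hij, hi, hj⟩
    exact ⟨i, j, hij, grid_translate i v hi, grid_translate j v hj⟩
  · set P : Finset (Fin N × Fin N) :=
      Finset.univ.filter (fun p : Fin N × Fin N => p.1 < p.2) with hP
    set Sp : Fin N × Fin N → Set (Set (ℝ × ℝ)) := fun p =>
      {O : Set (ℝ × ℝ) | ∃ x, ((∃ m : ℤ, ip x (toR2 (b p.1)) + l p.1 = (m : ℝ)) ∧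
        (∃ n : ℤ, ip x (toR2 (b p.2)) + l p.2 = (n : ℝ))) ∧ O = orb x} with hSp
    -- the orbit set equals the union of the pairwise orbit sets
    have hcover : {O : Set (ℝ × ℝ) | ∃ x ∈ gridX b l,
        O = {y | ∃ v : ℤ × ℤ, y = x + toR2 v}} = ⋃ p ∈ P, Sp p := by
      ext O
      constructor
      · rintro ⟨x, ⟨i, j, hij, hi, hj⟩, rfl⟩
        rcases lt_or_gt_of_ne hij with h | h
        · exact Set.mem_iUnion₂.mpr ⟨(i, j), by simp [hP, h], ⟨x, ⟨hi, hj⟩, rfl⟩⟩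
        · exact Set.mem_iUnion₂.mpr ⟨(j, i), by simp [hP, h], ⟨x, ⟨hj, hi⟩, rfl⟩⟩
      · intro hO
        rw [Set.mem_iUnion₂] at hO
        obtain ⟨p, hp, x, ⟨h1, h2⟩, rfl⟩ := hO
        have hlt : p.1 < p.2 := by simpa [hP] using hp
        exact ⟨x, ⟨p.1, p.2, ne_of_lt hlt, h1, h2⟩, rfl⟩
    -- each piece is finite with the right cardinality
    have hpiece : ∀ p ∈ P, (Sp p).Finite ∧ (Sp p).ncard = (detZ (b p.1) (b p.2)).natAbs := by
      intro p hp
      have hlt : p.1 < p.2 := by simpa [hP] using hp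
      by_cases hd : detZ (b p.1) (b p.2) = 0
      · have hempty : Sp p = ∅ := by
          ext O
          simp only [hSp, Set.mem_setOf_eq, Set.mem_empty_iff_false, iff_false]
          rintro ⟨x, ⟨h1, h2⟩, rfl⟩
          exact par_empty hnz hspan hnonres (ne_of_lt hlt) hd x ⟨h1, h2⟩
        rw [hempty, hd]
        simp
      · exact pair_count (b p.1) (b p.2) hd (l p.1) (l p.2)
    -- disjointness
    have hdisj : ∀ p ∈ P, ∀ q ∈ P, p ≠ q → Disjoint (Sp p) (Sp q) := by
      intro p hp q hq hpq
      have hltp : p.1 < p.2 := by simpa [hP] using hp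
      have hltq : q.1 < q.2 := by simpa [hP] using hq
      rw [Set.disjoint_left]
      rintro O ⟨x, ⟨hx1, hx2⟩, rfl⟩ ⟨y, ⟨hy1, hy2⟩, hOy⟩
      obtain ⟨v, hv⟩ := orb_eq_iff.mp hOy.symm
      -- x = y + toR2 v
      have hxq1 : x ∈ grid b l q.1 := by rw [hv]; exact grid_translate _ _ hy1
      have hxq2 : x ∈ grid b l q.2 := by rw [hv]; exact grid_translate _ _ hy2
      -- now x lies in at least grids p.1, p.2, q.1, q.2
      set T : Set (Fin N) := {i' | x ∈ grid b l i'} with hT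
      have hsubP : ({p.1, p.2} : Set (Fin N)) ⊆ T := by
        rintro y' hy'
        rcases hy' with rfl | rfl
        · exact hx1
        · exact hx2
      have h2card : ({p.1, p.2} : Set (Fin N)).ncard = 2 :=
        Set.ncard_pair (ne_of_lt hltp)
      have hTeq : ({p.1, p.2} : Set (Fin N)) = T := by
        apply Set.eq_of_subset_of_ncard_le hsubP _ (Set.toFinite _)
        rw [h2card]
        exact hnonres x
      have hq1 : q.1 ∈ ({p.1, p.2} : Set (Fin N)) := by rw [hTeq]; exact hxq1
      have hq2 : q.2 ∈ ({p.1, p.2} : Set (Fin N)) := by rw [hTeq]; exact hxq2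
      have h1 : q.1 = p.1 ∨ q.1 = p.2 := by simpa using hq1
      have h2 : q.2 = p.1 ∨ q.2 = p.2 := by simpa using hq2
      rcases h1 with h1 | h1 <;> rcases h2 with h2 | h2 <;> rw [h1, h2] at hltq
      · exact absurd hltq (lt_irrefl _)
      · exact hpq (Prod.ext h1 h2).symm
      · exact absurd (hltp.trans hltq) (lt_irrefl _)
      · exact absurd hltq (lt_irrefl _)
    -- final computation
    rw [hcover, ncard_biUnion P Sp (fun p hp => (hpiece p hp).1) hdisj]
    rw [show ∑ p ∈ P, (Sp p).ncard = ∑ p ∈ P, (detZ (b p.1) (b p.2)).natAbs from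
      Finset.sum_congr rfl (fun p hp => (hpiece p hp).2)]
    rw [hP, Finset.sum_filter, ← Finset.univ_product_univ, Finset.sum_product]
end
end
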